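/- Let (W, Pl) be a qualitative plausibility space and define A <* B iff there exists C ⊆ W with A ∩ C = ∅ and Pl(A) < Pl(C) ≤ Pl(B). Then <* is irreflexive, transitive, and antisymmetric. -/
import Mathlib


theorem ltStar_strict_order {W D : Type*} [PartialOrder D] [BoundedOrder D]
    (Pl : Set W → D)
    (hTop : Pl Set.univ = ⊤) (hBot : Pl (∅ : Set W) = ⊥)
    (A1 : ∀ A B : Set W, A ⊆ B → Pl A ≤ Pl B)
    (A2 : ∀ A B C : Set W, Disjoint A B → Disjoint A C → Disjoint B C →
      Pl C < Pl (A ∪ B) → Pl B < Pl (A ∪ C) → Pl (B ∪ C) < Pl A)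
    (A3 : ∀ A B : Set W, Pl A = ⊥ → Pl B = ⊥ → Pl (A ∪ B) = ⊥)
    (ltStar : Set W → Set W → Prop)
    (hlt : ∀ A B : Set W, ltStar A B ↔ ∃ C : Set W, A ∩ C = ∅ ∧ Pl A < Pl C ∧ Pl C ≤ Pl B) :
    (∀ A : Set W, ¬ ltStar A A) ∧
    (∀ A B C : Set W, ltStar A B → ltStar B C → ltStar A C) ∧
    (∀ A B : Set W, ltStar A B → ¬ ltStar B A) := by
  refine ⟨?_, ?_, ?_⟩
  · intro A h
    obtain ⟨C, _, h1, h2⟩ := (hlt A A).mp h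
    exact absurd (h1.trans_le h2) (lt_irrefl _)
  · intro A B C hAB hBC
    obtain ⟨B', hB'dis, hB'1, hB'2⟩ := (hlt A B).mp hAB
    obtain ⟨C', hC'dis, hC'1, hC'2⟩ := (hlt B C).mp hBC
    -- basic membership facts
    have hAB' : ∀ x, x ∈ B' → x ∉ A := by
      intro x hx hxA
      exact Set.eq_empty_iff_forall_notMem.mp hB'dis x ⟨hxA, hx⟩
    -- chain : Pl A < Pl C'
    have hchain : Pl A < Pl C' := hB'1.trans_le (hB'2.trans hC'1.le)
    have hA_le : Pl (A ∩ C') ≤ Pl A := A1 _ _ Set.inter_subset_left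
    -- Step 1: Pl (A ∩ C') < Pl (C' \ A), via A2 with (C'\A, A∩C', B'\C')
    have e1 : (C' \ A) ∪ (A ∩ C') = C' := by
      ext x; simp only [Set.mem_union, Set.mem_diff, Set.mem_inter_iff]; tauto
    have d1 : Disjoint (C' \ A) (A ∩ C') := by
      rw [Set.disjoint_left]; rintro x ⟨_, hxA⟩ ⟨hxA', _⟩; exact hxA hxA'
    have d2 : Disjoint (C' \ A) (B' \ C') := by
      rw [Set.disjoint_left]; rintro x ⟨hxC, _⟩ ⟨_, hxC'⟩; exact hxC' hxC
    have d3 : Disjoint (A ∩ C') (B' \ C') := by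
      rw [Set.disjoint_left]; rintro x ⟨_, hxC⟩ ⟨_, hxC'⟩; exact hxC' hxC
    have c1 : Pl (B' \ C') < Pl ((C' \ A) ∪ (A ∩ C')) := by
      rw [e1]
      exact lt_of_le_of_lt (le_trans (A1 _ _ Set.diff_subset) hB'2) hC'1
    have c2 : Pl (A ∩ C') < Pl ((C' \ A) ∪ (B' \ C')) := by
      have hsub : B' ⊆ (C' \ A) ∪ (B' \ C') := by
        intro x hx
        by_cases hxC : x ∈ C'
        · exact Or.inl ⟨hxC, hAB' x hx⟩
        · exact Or.inr ⟨hx, hxC⟩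
      exact lt_of_le_of_lt hA_le (lt_of_lt_of_le hB'1 (le_trans (A1 _ _ hsub) (le_refl _)))
    have step1 : Pl ((A ∩ C') ∪ (B' \ C')) < Pl (C' \ A) := A2 _ _ _ d1 d2 d3 c1 c2
    have g : Pl (A ∩ C') < Pl (C' \ A) :=
      lt_of_le_of_lt (A1 _ _ Set.subset_union_left) step1
    -- Step 2: Pl A < Pl (C' \ A), via A2 with (C'\A, A∩C', A\C')
    have d4 : Disjoint (C' \ A) (A \ C') := by
      rw [Set.disjoint_left]; rintro x ⟨_, hxA⟩ ⟨hxA', _⟩; exact hxA hxA'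
    have d5 : Disjoint (A ∩ C') (A \ C') := by
      rw [Set.disjoint_left]; rintro x ⟨_, hxC⟩ ⟨_, hxC'⟩; exact hxC' hxC
    have c3 : Pl (A \ C') < Pl ((C' \ A) ∪ (A ∩ C')) := by
      rw [e1]
      exact lt_of_le_of_lt (A1 _ _ Set.diff_subset) hchain
    have c4 : Pl (A ∩ C') < Pl ((C' \ A) ∪ (A \ C')) :=
      lt_of_lt_of_le g (A1 _ _ Set.subset_union_left)
    have step2 : Pl ((A ∩ C') ∪ (A \ C')) < Pl (C' \ A) := A2 _ _ _ d1 d4 d5 c3 c4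
    have eA : (A ∩ C') ∪ (A \ C') = A := by
      ext x; simp only [Set.mem_union, Set.mem_inter_iff, Set.mem_diff]; tauto
    rw [eA] at step2
    refine (hlt A C).mpr ⟨C' \ A, ?_, step2, le_trans (A1 _ _ Set.diff_subset) hC'2⟩
    ext x; simp only [Set.mem_inter_iff, Set.mem_diff, Set.mem_empty_iff_false, iff_false]
    rintro ⟨hxA, _, hxA'⟩; exact hxA' hxA
  · intro A B h1 h2
    obtain ⟨C, _, hc1, hc2⟩ := (hlt A B).mp h1
    obtain ⟨C', _, hc1', hc2'⟩ := (hlt B A).mp h2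
    exact absurd ((hc1.trans_le hc2).trans (hc1'.trans_le hc2')) (lt_irrefl _)
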